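/- Let k ≠ 0 be real and let q : I → ℝ³ be a twice-differentiable curve on a real interval I with q(t) ≠ 0 and q̈(t) = −2k q(t)/‖q(t)‖⁴ for all t ∈ I (the system with potential V = −k/‖q‖²). Let H(t) = ½‖q̇(t)‖² − k/‖q(t)‖². Then both functions I₁(t) = −H(t) t² + t ⟨q(t), q̇(t)⟩ − ½‖q(t)‖² and I₂(t) = −H(t) t + ½ ⟨q(t), q̇(t)⟩ are constant on I. -/

import Mathlib

theorem ell_two_time_dependent_integrals (k : ℝ) (hk : k ≠ 0)
    (I : Set ℝ) (hI : Convex ℝ I)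
    (q q' q'' : ℝ → EuclideanSpace ℝ (Fin 3))
    (hq : ∀ t ∈ I, HasDerivWithinAt q (q' t) I t)
    (hq' : ∀ t ∈ I, HasDerivWithinAt q' (q'' t) I t)
    (hq0 : ∀ t ∈ I, q t ≠ 0)
    (heq : ∀ t ∈ I, q'' t = (-(2 * k / ‖q t‖^4)) • q t)
    (H : ℝ → ℝ) (hH : ∀ t, H t = (1/2) * ‖q' t‖^2 - k / ‖q t‖^2) :
    (∀ t₁ ∈ I, ∀ t₂ ∈ I,
        -(H t₁) * t₁^2 + t₁ * (inner ℝ (q t₁) (q' t₁) : ℝ) - (1/2) * ‖q t₁‖^2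
          = -(H t₂) * t₂^2 + t₂ * (inner ℝ (q t₂) (q' t₂) : ℝ) - (1/2) * ‖q t₂‖^2)
    ∧ (∀ t₁ ∈ I, ∀ t₂ ∈ I,
        -(H t₁) * t₁ + (1/2) * (inner ℝ (q t₁) (q' t₁) : ℝ)
          = -(H t₂) * t₂ + (1/2) * (inner ℝ (q t₂) (q' t₂) : ℝ)) := by
  -- constancy criterion
  have key : ∀ (f f' : ℝ → ℝ), (∀ t ∈ I, HasDerivWithinAt f (f' t) I t) →
      (∀ t ∈ I, f' t = 0) → ∀ t₁ ∈ I, ∀ t₂ ∈ I, f t₁ = f t₂ := by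
    intro f f' hf hf0 t₁ h₁ t₂ h₂
    have h := Convex.norm_image_sub_le_of_norm_hasDerivWithin_le (C := 0) hf
      (fun x hx => by simp [hf0 x hx]) hI h₁ h₂
    have h2 : ‖f t₂ - f t₁‖ ≤ 0 := by simpa using h
    have h3 : f t₂ - f t₁ = 0 := by
      simpa using le_antisymm h2 (norm_nonneg _)
    linarith [sub_eq_zero.mp h3]
  set r2 : ℝ → ℝ := fun t => (inner ℝ (q t) (q t) : ℝ) with hr2def
  set A : ℝ → ℝ := fun t => (inner ℝ (q t) (q' t) : ℝ) with hAdef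
  set B : ℝ → ℝ := fun t => (inner ℝ (q' t) (q' t) : ℝ) with hBdef
  have hr2norm : ∀ t, r2 t = ‖q t‖^2 := fun t => real_inner_self_eq_norm_sq _
  have hBnorm : ∀ t, B t = ‖q' t‖^2 := fun t => real_inner_self_eq_norm_sq _
  have hr2ne : ∀ t ∈ I, r2 t ≠ 0 := by
    intro t ht
    rw [hr2norm]
    exact pow_ne_zero _ (norm_ne_zero_iff.mpr (hq0 t ht))
  -- inner products with q''
  have hqq'' : ∀ t ∈ I, (inner ℝ (q t) (q'' t) : ℝ) = -(2 * k) / r2 t := by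
    intro t ht
    rw [heq t ht, real_inner_smul_right]
    have h4 : ‖q t‖^4 = (r2 t)^2 := by rw [hr2norm]; ring
    have h5 : (inner ℝ (q t) (q t) : ℝ) = r2 t := rfl
    rw [h4, h5]
    have hr := hr2ne t ht
    field_simp
  have hq'q'' : ∀ t ∈ I, (inner ℝ (q' t) (q'' t) : ℝ) = -(2 * k) / (r2 t)^2 * A t := by
    intro t ht
    have h4 : ‖q t‖^4 = (r2 t)^2 := by rw [hr2norm]; ring
    have h5 : (inner ℝ (q' t) (q t) : ℝ) = A t := real_inner_comm _ _
    rw [heq t ht, real_inner_smul_right, h5, h4]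
    ring
  -- derivatives
  have hA : ∀ t ∈ I, HasDerivWithinAt A ((inner ℝ (q t) (q'' t) : ℝ) + B t) I t := by
    intro t ht
    exact (hq t ht).inner ℝ (hq' t ht)
  have hr2' : ∀ t ∈ I, HasDerivWithinAt r2 (2 * A t) I t := by
    intro t ht
    have h := (hq t ht).inner ℝ (hq t ht)
    rw [real_inner_comm (q t) (q' t), ← two_mul] at h
    exact h
  have hB' : ∀ t ∈ I, HasDerivWithinAt B (2 * (inner ℝ (q' t) (q'' t) : ℝ)) I t := by
    intro t ht
    have h := (hq' t ht).inner ℝ (hq' t ht)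
    rw [real_inner_comm (q' t) (q'' t), ← two_mul] at h
    exact h
  have hinv : ∀ t ∈ I, HasDerivWithinAt (fun s => (r2 s)⁻¹) (-(2 * A t) / (r2 t)^2) I t := by
    intro t ht
    exact (hr2' t ht).inv (hr2ne t ht)
  -- H agrees with the formula in terms of inner products
  have hHfun : H = fun t => (1/2) * B t - k * (r2 t)⁻¹ := by
    funext t
    rw [hH t, hBnorm, hr2norm]
    ring
  -- derivative of H-as-function
  have hHd : ∀ t ∈ I, HasDerivWithinAt H
      ((1/2) * (2 * (inner ℝ (q' t) (q'' t) : ℝ)) - k * (-(2 * A t) / (r2 t)^2)) I t := by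
    intro t ht
    rw [hHfun]
    exact ((hB' t ht).const_mul ((1:ℝ)/2)).sub ((hinv t ht).const_mul k)
  have hHd0 : ∀ t ∈ I, HasDerivWithinAt H 0 I t := by
    intro t ht
    have h := hHd t ht
    have : (1/2) * (2 * (inner ℝ (q' t) (q'' t) : ℝ)) - k * (-(2 * A t) / (r2 t)^2) = 0 := by
      rw [hq'q'' t ht]
      ring
    rwa [this] at h
  -- key relation : A' = 2 H
  have hA2H : ∀ t ∈ I, (inner ℝ (q t) (q'' t) : ℝ) + B t = 2 * H t := by
    intro t ht
    rw [hqq'' t ht]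
    simp only [hHfun]
    ring
  constructor
  · -- I₁
    apply key (fun t => -(H t) * t^2 + t * A t - (1/2) * ‖q t‖^2)
      (fun t => (-(0:ℝ) * t^2 + -(H t) * (2 * t^(2-1) * 1)) +
        (1 * A t + t * ((inner ℝ (q t) (q'' t) : ℝ) + B t)) - (1/2) * (2 * A t))
    · intro t ht
      have h1 : HasDerivWithinAt (fun s => -(H s) * s^2)
          (-(0:ℝ) * t^2 + -(H t) * (2 * t^(2-1) * 1)) I t :=
        ((hHd0 t ht).neg).mul (((hasDerivWithinAt_id t I).pow 2))
      have h2 : HasDerivWithinAt (fun s => s * A s)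
          (1 * A t + t * ((inner ℝ (q t) (q'' t) : ℝ) + B t)) I t :=
        (hasDerivWithinAt_id t I).mul (hA t ht)
      have h3 : HasDerivWithinAt (fun s => (1/2 : ℝ) * ‖q s‖^2) ((1/2) * (2 * A t)) I t := by
        have := (hr2' t ht).const_mul ((1:ℝ)/2)
        have heqf : (fun s => (1/2 : ℝ) * r2 s) = fun s => (1/2 : ℝ) * ‖q s‖^2 := by
          funext s; rw [hr2norm]
        rwa [heqf] at this
      exact (h1.add h2).sub h3
    · intro t ht
      rw [hA2H t ht]
      simp
      ring
  · -- I₂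
    apply key (fun t => -(H t) * t + (1/2) * A t)
      (fun t => (-(0:ℝ) * t + -(H t) * 1) + (1/2) * ((inner ℝ (q t) (q'' t) : ℝ) + B t))
    · intro t ht
      exact (((hHd0 t ht).neg).mul (hasDerivWithinAt_id t I)).add
        ((hA t ht).const_mul ((1:ℝ)/2))
    · intro t ht
      rw [hA2H t ht]
      ring
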